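/- Let r_m be a residual in ℝ^n orthogonal to the current approximation G_m (with f = G_m + r_m), suppose |⟨r_m, φ⟩| < t‖r_m‖ for all atoms φ ∈ Φ, and let f^ε satisfy ‖f − f^ε‖ ≤ ε and f^ε/C ∈ A_1(Φ) for some C > 0. Then ‖r_m‖ ≤ ε + tC. -/

import Mathlib

/-- If r_m = f − G_m is orthogonal to G_m, every atom φ ∈ D has
|⟨r_m, φ⟩| < t‖r_m‖, and f^ε satisfies ‖f − f^ε‖ ≤ ε with f^ε/C in the closure
of the convex hull of ±D, then ‖r_m‖ ≤ ε + tC. -/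
theorem residual_bound_at_termination
    {E : Type*} [NormedAddCommGroup E] [InnerProductSpace ℝ E]
    (D : Set E) (hD : ∀ φ ∈ D, ‖φ‖ = 1)
    (f Gm rm fε : E) (t ε C : ℝ)
    (ht : 0 < t) (hε : 0 ≤ ε) (hC : 0 < C)
    (hdecomp : f = Gm + rm) (horth : (inner ℝ rm Gm : ℝ) = 0)
    (hthresh : ∀ φ ∈ D, |(inner ℝ rm φ : ℝ)| < t * ‖rm‖)
    (happrox : ‖f - fε‖ ≤ ε)
    (hA1 : C⁻¹ • fε ∈ closure (convexHull ℝ (D ∪ (-D)))) :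
    ‖rm‖ ≤ ε + t * C := by
  rcases eq_or_ne rm 0 with h0 | h0
  · simp [h0]
    positivity
  -- halfspace S
  set S : Set E := {x | (inner ℝ rm x : ℝ) ≤ t * ‖rm‖} with hS
  have hSconvex : Convex ℝ S := convex_halfSpace_le ⟨fun a b => inner_add_right _ _ _,
      fun c x => real_inner_smul_right _ _ _⟩ _
  have hSclosed : IsClosed S :=
    isClosed_le (Continuous.inner continuous_const continuous_id) continuous_const
  have hsub : D ∪ (-D) ⊆ S := by
    rintro x (hx | hx)
    · exact le_of_lt ((abs_lt.mp (hthresh x hx)).2)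
    · have := hthresh (-x) hx
      have h2 := (abs_lt.mp this).1
      simp only [hS, Set.mem_setOf_eq]
      have : (inner ℝ rm x : ℝ) = -(inner ℝ rm (-x) : ℝ) := by simp
      rw [this]
      linarith
  have hmem : C⁻¹ • fε ∈ S :=
    closure_minimal (convexHull_min hsub hSconvex) hSclosed hA1
  have hfε : (inner ℝ rm fε : ℝ) ≤ t * ‖rm‖ * C := by
    have : (inner ℝ rm (C⁻¹ • fε) : ℝ) ≤ t * ‖rm‖ := hmem
    rw [real_inner_smul_right] at this
    have := mul_le_mul_of_nonneg_left this hC.le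
    rw [← mul_assoc, mul_inv_cancel₀ hC.ne', one_mul] at this
    linarith [this]
  have hrf : (inner ℝ rm f : ℝ) = ‖rm‖ ^ 2 := by
    rw [hdecomp, inner_add_right, horth, real_inner_self_eq_norm_sq]
    ring
  have hcs : (inner ℝ rm (f - fε) : ℝ) ≤ ‖rm‖ * ε := by
    calc (inner ℝ rm (f - fε) : ℝ) ≤ ‖rm‖ * ‖f - fε‖ := real_inner_le_norm _ _
    _ ≤ ‖rm‖ * ε := by gcongr
  have key : ‖rm‖ ^ 2 ≤ ‖rm‖ * ε + t * ‖rm‖ * C := by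
    have : (inner ℝ rm (f - fε) : ℝ) + (inner ℝ rm fε : ℝ) = ‖rm‖ ^ 2 := by
      rw [← inner_add_right]; simp [hrf]
    linarith
  have hn : 0 < ‖rm‖ := norm_pos_iff.mpr h0
  nlinarith
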